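/- For all real numbers a and b, ζ(a) · (β(b) − β(a)) ≤ 𝔅(b) − 𝔅(a), where 𝔅(s) = ∫₀ˢ ζ(q) β'(q) dq. (This expresses that ζ(a) belongs to the convex subdifferential of B at β(a), since 𝔅 = B ∘ β.) -/

import Mathlib

open MeasureTheory intervalIntegral
open scoped NNReal ENNReal

/-- For all real numbers `a` and `b`, `ζ a * (β b - β a) ≤ 𝔅 b - 𝔅 a`,
where `𝔅 s = ∫ q in 0..s, ζ q * β' q` (so that `ζ a` belongs to the convex
subdifferential of `B` at `β a`, since `𝔅 = B ∘ β`). -/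
theorem stmt5 (β ζ : ℝ → ℝ) (Lβ Lζ : ℝ) (hLβ : 0 < Lβ) (hLζ : 0 < Lζ)
    (hβmono : Monotone β) (hζmono : Monotone ζ)
    (hβlip : LipschitzWith Lβ.toNNReal β) (hζlip : LipschitzWith Lζ.toNNReal ζ)
    (hβ0 : β 0 = 0) (hζ0 : ζ 0 = 0)
    (𝔅 : ℝ → ℝ) (h𝔅 : ∀ s : ℝ, 𝔅 s = ∫ q in (0:ℝ)..s, ζ q * deriv β q)
    (a b : ℝ) :
    ζ a * (β b - β a) ≤ 𝔅 b - 𝔅 a := by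
  have hLβ' : (Lβ.toNNReal : ℝ) = Lβ := Real.coe_toNNReal _ hLβ.le
  have hβcont : Continuous β := hβlip.continuous
  have hζcont : Continuous ζ := hζlip.continuous
  -- the Stieltjes function associated to β
  set F : StieltjesFunction ℝ :=
    ⟨β, hβmono, fun x => (hβcont.continuousAt).continuousWithinAt⟩ with hFdef
  set μ : Measure ℝ := F.measure with hμdef
  -- β is Lipschitz, so Lβ • id - β is monotone
  have hmonoG : Monotone (fun x => Lβ * x - β x) := by
    intro x y hxy
    have h1 : dist (β x) (β y) ≤ Lβ * dist x y := by
      have := hβlip.dist_le_mul x y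
      rwa [hLβ'] at this
    rw [Real.dist_eq, Real.dist_eq, abs_of_nonpos (by linarith [hβmono hxy]),
      abs_of_nonpos (by linarith)] at h1
    simp only
    linarith
  set G : StieltjesFunction ℝ :=
    ⟨fun x => Lβ * x - β x, hmonoG,
      fun x => (((continuous_const.mul continuous_id).sub hβcont).continuousAt).continuousWithinAt⟩
    with hGdef
  have hFG : F + G = (Lβ.toNNReal : ℝ≥0) • StieltjesFunction.id := by
    apply StieltjesFunction.ext
    intro x
    show β x + (Lβ * x - β x) = (Lβ.toNNReal : ℝ) * x
    rw [hLβ']; ring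
  have hsum : μ + G.measure = (Lβ.toNNReal : ℝ≥0) • (volume : Measure ℝ) := by
    rw [hμdef, ← StieltjesFunction.measure_add, hFG, StieltjesFunction.measure_smul,
      ← Real.volume_eq_stieltjes_id]
  have hle : μ ≤ (Lβ.toNNReal : ℝ≥0) • (volume : Measure ℝ) := by
    rw [← hsum]; exact Measure.le_add_right le_rfl
  have hac : μ ≪ (volume : Measure ℝ) := Measure.absolutelyContinuous_of_le_smul hle
  -- the "good" version of the derivative of β
  set g : ℝ → ℝ := fun x => min ((μ.rnDeriv volume x).toReal) Lβ with hgdef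
  have hg_meas : Measurable g :=
    (Measure.measurable_rnDeriv μ volume).ennreal_toReal.min measurable_const
  have hg0 : ∀ x, 0 ≤ g x := fun x => le_min ENNReal.toReal_nonneg hLβ.le
  have hgLβ : ∀ x, g x ≤ Lβ := fun x => min_le_right _ _
  have hgae : ∀ᵐ x, deriv β x = g x ∧ (μ.rnDeriv volume x).toReal = g x := by
    filter_upwards [F.ae_hasDerivAt] with x hx
    have hd : deriv β x = (μ.rnDeriv volume x).toReal := hx.deriv
    have hbound : (μ.rnDeriv volume x).toReal ≤ Lβ := by
      have h1 : ‖(1 : ℝ →L[ℝ] ℝ).smulRight ((μ.rnDeriv volume x).toReal)‖ ≤ Lβ.toNNReal :=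
        hx.hasFDerivAt.le_of_lipschitz hβlip
      rw [ContinuousLinearMap.norm_smulRight_apply, norm_one, one_mul,
        Real.norm_eq_abs, abs_of_nonneg ENNReal.toReal_nonneg, hLβ'] at h1
      exact h1
    have : g x = (μ.rnDeriv volume x).toReal := min_eq_left hbound
    exact ⟨hd.trans this.symm, this.symm⟩
  have hderiv_g : deriv β =ᵐ[volume] g := by filter_upwards [hgae] with x hx using hx.1
  -- fundamental theorem of calculus for the Lipschitz monotone function β
  have hFTC : ∀ x y : ℝ, x ≤ y → ∫ q in Set.Ioc x y, g q = β y - β x := by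
    intro x y hxy
    have h1 : ∫ q in Set.Ioc x y, g q = ∫ q in Set.Ioc x y, (μ.rnDeriv volume q).toReal := by
      apply MeasureTheory.integral_congr_ae
      filter_upwards [ae_restrict_of_ae hgae] with q hq using hq.2.symm
    rw [h1, Measure.setIntegral_toReal_rnDeriv hac, hμdef, measureReal_def, F.measure_Ioc,
      ENNReal.toReal_ofReal (sub_nonneg.2 (hβmono hxy))]
  -- integrability facts
  have hprod_meas : Measurable (fun q => ζ q * g q) := hζcont.measurable.mul hg_meas
  have hIntOn : ∀ x y : ℝ, IntegrableOn (fun q => ζ q * g q) (Set.uIoc x y) := by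
    intro x y
    apply Integrable.mono' ((continuous_const.mul hζcont.abs).integrableOn_Ioc)
      hprod_meas.aestronglyMeasurable
    filter_upwards with q
    rw [Real.norm_eq_abs, abs_mul]
    calc |ζ q| * |g q| ≤ |ζ q| * Lβ := by
          apply mul_le_mul_of_nonneg_left _ (abs_nonneg _)
          rw [abs_of_nonneg (hg0 q)]; exact hgLβ q
      _ = Lβ * |ζ q| := mul_comm _ _
  have hIntInt : ∀ x y : ℝ, IntervalIntegrable (fun q => ζ q * deriv β q) volume x y := by
    intro x y
    rw [intervalIntegrable_iff]
    apply (hIntOn x y).congr_fun_ae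
    filter_upwards [ae_restrict_of_ae hderiv_g] with q hq using by rw [hq]
  have hsub : 𝔅 b - 𝔅 a = ∫ q in a..b, ζ q * deriv β q := by
    rw [h𝔅, h𝔅]
    exact integral_interval_sub_left (hIntInt 0 b) (hIntInt 0 a)
  rw [hsub]
  have hcongr : ∀ x y : ℝ,
      (∫ q in Set.Ioc x y, ζ q * deriv β q) = ∫ q in Set.Ioc x y, ζ q * g q := by
    intro x y
    apply MeasureTheory.integral_congr_ae
    filter_upwards [ae_restrict_of_ae hderiv_g] with q hq using by rw [hq]
  have hIntConst : ∀ x y : ℝ, IntegrableOn (fun q => ζ a * g q) (Set.Ioc x y) := by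
    intro x y
    apply Integrable.mono' (integrableOn_const (C := |ζ a| * Lβ) measure_Ioc_lt_top.ne)
      ((measurable_const.mul hg_meas).aestronglyMeasurable)
    filter_upwards with q
    rw [Real.norm_eq_abs, Pi.mul_apply, abs_mul]
    exact mul_le_mul_of_nonneg_left (by rw [abs_of_nonneg (hg0 q)]; exact hgLβ q) (abs_nonneg _)
  rcases le_total a b with hab | hab
  · -- case a ≤ b
    rw [integral_of_le hab, hcongr a b]
    have key : ∫ q in Set.Ioc a b, ζ a * g q ≤ ∫ q in Set.Ioc a b, ζ q * g q := by
      apply integral_mono_ae (hIntConst a b)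
        ((hIntOn a b).mono_set (by rw [Set.uIoc_of_le hab]))
      filter_upwards [ae_restrict_mem measurableSet_Ioc] with q hq
      exact mul_le_mul_of_nonneg_right (hζmono hq.1.le) (hg0 q)
    calc ζ a * (β b - β a) = ∫ q in Set.Ioc a b, ζ a * g q := by
          rw [MeasureTheory.integral_const_mul, hFTC a b hab]
      _ ≤ ∫ q in Set.Ioc a b, ζ q * g q := key
  · -- case b ≤ a
    rw [integral_symm, integral_of_le hab, hcongr b a]
    have key : ∫ q in Set.Ioc b a, ζ q * g q ≤ ∫ q in Set.Ioc b a, ζ a * g q := by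
      apply integral_mono_ae ((hIntOn b a).mono_set (by rw [Set.uIoc_of_le hab]))
        (hIntConst b a)
      filter_upwards [ae_restrict_mem measurableSet_Ioc] with q hq
      exact mul_le_mul_of_nonneg_right (hζmono hq.2) (hg0 q)
    have : ∫ q in Set.Ioc b a, ζ a * g q = ζ a * (β a - β b) := by
      rw [MeasureTheory.integral_const_mul, hFTC b a hab]
    nlinarith [key]
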